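/- Let O be a subring of the ring of integers of a number field K, let ξ be a nonzero algebraic integer with [K(ξ):K] = d, and let P(x) = a_0 + a_1 x + ... + a_n x^n ∈ O[x] with 1 ≤ n < d. Then the house of α = P(ξ) satisfies |α|_house ≥ max over embeddings σ : K → ℂ of (1 − d^{3/2} D(τ_σ(ξ)/‖τ_σ(ξ)‖)) · |σ(a_n)| · ‖τ_σ(ξ)‖^n, where τ_σ(ξ) is the d-tuple of images of ξ under the d extensions of σ to K(ξ), and ‖·‖ is the maximum norm. -/

import Mathlib

/-- `ζ_d = exp(2πi/d)`. -/
noncomputable def zetad (d : ℕ) : ℂ := Complex.exp (2 * Real.pi * Complex.I / d)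

/-- The finite discrepancy `D(ξ) = inf_{|u|=1} max_j min_i |ξ_i − u ζ_d^j|`. -/
noncomputable def Disc {d : ℕ} (ξ : Fin d → ℂ) : ℝ :=
  sInf {t : ℝ | ∃ u : ℂ, ‖u‖ = 1 ∧
    t = ⨆ j : Fin d, ⨅ i : Fin d, ‖ξ i - u * zetad d ^ ((j : ℕ) + 1)‖}

/-- The house of an algebraic number `α`: the maximum modulus of the roots of its
minimal polynomial over `ℚ` (its conjugates). -/
noncomputable def house (α : ℂ) : ℝ :=
  sSup {x : ℝ | ∃ z : ℂ, Polynomial.aeval z (minpoly ℚ α) = 0 ∧ x = ‖z‖}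



lemma zetad_prim {d : ℕ} (hd : 0 < d) : IsPrimitiveRoot (zetad d) d := by
  have := Complex.isPrimitiveRoot_exp d hd.ne'
  simpa [zetad, mul_comm] using this

lemma sum_zetad_pow {d : ℕ} (hd : 0 < d) (m : ℕ) :
    ∑ j : Fin d, zetad d ^ (((j : ℕ) + 1) * m) = if d ∣ m then (d : ℂ) else 0 := by
  have hz := zetad_prim hd
  have h1 : ∀ j : Fin d, zetad d ^ (((j : ℕ) + 1) * m) = zetad d ^ m * (zetad d ^ m) ^ (j : ℕ) := by
    intro j; rw [← pow_mul]; ring_nf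
  rw [Finset.sum_congr rfl (fun j _ => h1 j), ← Finset.mul_sum]
  by_cases hdm : d ∣ m
  · have : zetad d ^ m = 1 := hz.pow_eq_one_iff_dvd m |>.mpr hdm
    simp [this, hdm]
  · have hne : zetad d ^ m ≠ 1 := fun h => hdm ((hz.pow_eq_one_iff_dvd m).mp h)
    have hsum : ∑ j : Fin d, (zetad d ^ m) ^ (j : ℕ) = 0 := by
      rw [Fin.sum_univ_eq_sum_range]
      have := geom_sum_mul (zetad d ^ m) d
      have hpow : (zetad d ^ m) ^ d = 1 := by
        rw [← pow_mul, mul_comm, pow_mul, hz.pow_eq_one, one_pow]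
      rw [hpow, sub_self] at this
      exact (mul_eq_zero.mp this).resolve_right (sub_ne_zero.mpr hne)
    simp [hsum, hdm]

lemma zetad_abs (d : ℕ) : ‖zetad d‖ = 1 := by
  rw [zetad, Complex.norm_exp]
  have : (2 * ↑Real.pi * Complex.I / ↑d).re = 0 := by
    simp [Complex.div_re]
  rw [this, Real.exp_zero]

lemma zetad_conj {d : ℕ} (hd : 0 < d) :
    (starRingEnd ℂ) (zetad d) = zetad d ^ (d - 1) := by
  have hne : zetad d ≠ 0 := (zetad_prim hd).ne_zero hd.ne'
  apply mul_left_cancel₀ hne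
  rw [Complex.mul_conj, ← Complex.sq_norm, zetad_abs, ← pow_succ']
  have : d - 1 + 1 = d := Nat.succ_pred_eq_of_pos hd
  rw [this, (zetad_prim hd).pow_eq_one]
  norm_num

lemma sum_tswap {d : ℕ} (hd : 0 < d) (u : ℂ) (hu : ‖u‖ = 1)
    {k k' : ℕ} (hkk : k ≤ k') (hk' : k' < d) :
    ∑ j : Fin d, (u * zetad d ^ ((j : ℕ) + 1)) ^ k *
      ((starRingEnd ℂ) (u * zetad d ^ ((j : ℕ) + 1))) ^ k' =
    if k = k' then (d : ℂ) else 0 := by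
  set m := k' - k with hm
  have hmlt : m < d := lt_of_le_of_lt (Nat.sub_le _ _) hk'
  have habs : ∀ j : Fin d, ‖u * zetad d ^ ((j : ℕ) + 1)‖ = 1 := by
    intro j; rw [norm_mul, norm_pow, hu, zetad_abs, one_pow, one_mul]
  have hmc : ∀ j : Fin d, (u * zetad d ^ ((j : ℕ) + 1)) *
      (starRingEnd ℂ) (u * zetad d ^ ((j : ℕ) + 1)) = 1 := by
    intro j; rw [Complex.mul_conj, ← Complex.sq_norm, habs]; norm_num
  have key : ∀ j : Fin d, (u * zetad d ^ ((j : ℕ) + 1)) ^ k *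
      ((starRingEnd ℂ) (u * zetad d ^ ((j : ℕ) + 1))) ^ k' =
      ((starRingEnd ℂ) u) ^ m * zetad d ^ (((j : ℕ) + 1) * ((d - 1) * m)) := by
    intro j
    have hsplit : k' = k + m := by omega
    rw [hsplit, pow_add _ k m, ← mul_assoc, ← mul_pow, hmc j, one_pow, one_mul]
    rw [map_mul, mul_pow, map_pow, zetad_conj hd, ← pow_mul, ← pow_mul]
    ring_nf
  rw [Finset.sum_congr rfl (fun j _ => key j), ← Finset.mul_sum, sum_zetad_pow hd]
  have hdvd : d ∣ (d - 1) * m ↔ d ∣ m := by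
    constructor
    · intro h
      have h2 : d ∣ d * m := Dvd.intro m rfl
      have : d * m - (d - 1) * m = m := by
        have hd1 : d - 1 + 1 = d := by omega
        have : (d - 1) * m + m = d * m := by
          calc (d - 1) * m + m = ((d - 1) + 1) * m := by ring
          _ = d * m := by rw [hd1]
        omega
      exact this ▸ Nat.dvd_sub h2 h
    · exact fun h => h.mul_left _
  by_cases hkk' : k = k'
  · have : m = 0 := by omega
    simp [hkk', this]
  · have hm0 : m ≠ 0 := by omega
    have : ¬ d ∣ (d - 1) * m := by
      rw [hdvd]; exact fun h => hm0 (Nat.eq_zero_of_dvd_of_lt h hmlt)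
    simp [hkk', this]

lemma sum_t {d : ℕ} (hd : 0 < d) (u : ℂ) (hu : ‖u‖ = 1)
    {k k' : ℕ} (hk : k < d) (hk' : k' < d) :
    ∑ j : Fin d, (u * zetad d ^ ((j : ℕ) + 1)) ^ k *
      ((starRingEnd ℂ) (u * zetad d ^ ((j : ℕ) + 1))) ^ k' =
    if k = k' then (d : ℂ) else 0 := by
  rcases le_or_gt k k' with h | h
  · exact sum_tswap hd u hu h hk'
  · have hs := sum_tswap hd u hu h.le hk
    have hc := congrArg (starRingEnd ℂ) hs
    rw [map_sum] at hc
    simp only [map_mul, map_pow, Complex.conj_conj] at hc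
    have heq : ∀ j : Fin d, (u * zetad d ^ ((j : ℕ) + 1)) ^ k *
        ((starRingEnd ℂ) (u * zetad d ^ ((j : ℕ) + 1))) ^ k' =
        ((starRingEnd ℂ) u * ((starRingEnd ℂ) (zetad d)) ^ ((j : ℕ) + 1)) ^ k' *
        (u * zetad d ^ ((j : ℕ) + 1)) ^ k := by
      intro j; rw [map_mul, map_pow]; ring
    rw [Finset.sum_congr rfl (fun j _ => heq j), hc]
    have hne : k' ≠ k := h.ne
    have hne' : k ≠ k' := h.ne'
    simp [hne, hne']


open IntermediateField in
lemma exists_hom {F E : Type*} [Field F] [Field E] [Algebra F E] (x : E) (hx : IsIntegral F x)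
    (σ : F →+* ℂ) (y : ℂ) (hy : Polynomial.eval y ((minpoly F x).map σ) = 0) :
    ∃ φ : F⟮x⟯ →+* ℂ, (∀ c : F, φ (algebraMap F F⟮x⟯ c) = σ c) ∧
      φ (IntermediateField.AdjoinSimple.gen F x) = y := by
  letI : Algebra F ℂ := σ.toAlgebra
  have hσ : algebraMap F ℂ = σ := RingHom.algebraMap_toAlgebra σ
  have hy' : (Polynomial.aeval y) (minpoly F (IntermediateField.adjoin.powerBasis hx).gen) = 0 := by
    rw [IntermediateField.adjoin.powerBasis_gen, IntermediateField.minpoly_gen,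
      Polynomial.aeval_def, ← Polynomial.eval_map, hσ]
    exact hy
  refine ⟨((IntermediateField.adjoin.powerBasis hx).lift y hy').toRingHom, fun c => ?_, ?_⟩
  · have h := ((IntermediateField.adjoin.powerBasis hx).lift y hy').commutes c
    rw [hσ] at h
    exact h
  · have h := (IntermediateField.adjoin.powerBasis hx).lift_gen y hy'
    rwa [IntermediateField.adjoin.powerBasis_gen] at h

open IntermediateField in
lemma conj_root (K : IntermediateField ℚ ℂ) (ξ : ℂ) (hKξ : IsIntegral K ξ)
    (n : ℕ) (a : Fin (n + 1) → K) (σ : K →+* ℂ) (y : ℂ)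
    (hy : Polynomial.eval y ((minpoly K ξ).map σ) = 0) :
    Polynomial.aeval (∑ k : Fin (n + 1), σ (a k) * y ^ (k : ℕ))
      (minpoly ℚ (∑ k : Fin (n + 1), ((a k : ℂ)) * ξ ^ (k : ℕ))) = 0 := by
  obtain ⟨φ, hφ1, hφ2⟩ := exists_hom ξ hKξ σ y hy
  set α : ℂ := ∑ k : Fin (n + 1), ((a k : ℂ)) * ξ ^ (k : ℕ) with hα
  set α' : K⟮ξ⟯ := ∑ k : Fin (n + 1),
    algebraMap K K⟮ξ⟯ (a k) * (AdjoinSimple.gen K ξ) ^ (k : ℕ) with hα'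
  have h1 : algebraMap K⟮ξ⟯ ℂ α' = α := by
    rw [hα', map_sum]
    refine Finset.sum_congr rfl fun k _ => ?_
    rw [map_mul, map_pow, AdjoinSimple.algebraMap_gen,
      ← IsScalarTower.algebraMap_apply K K⟮ξ⟯ ℂ]
    rfl
  set q := minpoly ℚ α with hq
  have h2 : Polynomial.aeval α' q = 0 := by
    apply (algebraMap K⟮ξ⟯ ℂ).injective.eq_iff.mp
    rw [map_zero]
    have := Polynomial.aeval_algHom_apply (algebraMap K⟮ξ⟯ ℂ).toRatAlgHom α' q
    have hcoe : (algebraMap K⟮ξ⟯ ℂ).toRatAlgHom α' = algebraMap K⟮ξ⟯ ℂ α' := rfl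
    rw [hcoe, h1] at this
    rw [show ((algebraMap ↥K⟮ξ⟯ ℂ) ((Polynomial.aeval α') q)) =
      (algebraMap ↥K⟮ξ⟯ ℂ).toRatAlgHom ((Polynomial.aeval α') q) from rfl, ← this]
    exact minpoly.aeval ℚ α
  have h3 : φ α' = ∑ k : Fin (n + 1), σ (a k) * y ^ (k : ℕ) := by
    rw [hα', map_sum]
    exact Finset.sum_congr rfl fun k _ => by rw [map_mul, map_pow, hφ1, hφ2]
  have h4 := Polynomial.aeval_algHom_apply φ.toRatAlgHom α' q
  have hφcoe : φ.toRatAlgHom α' = φ α' := rfl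
  rw [hφcoe, h3, h2, map_zero] at h4
  exact h4

lemma abs_pow_sub_pow (z w : ℂ) (R : ℝ) (hz : ‖z‖ ≤ R) (hw : ‖w‖ ≤ R)
    (k : ℕ) : ‖z ^ k - w ^ k‖ ≤ k * R ^ (k - 1) * ‖z - w‖ := by
  have hR : 0 ≤ R := le_trans (norm_nonneg z) hz
  have h := geom_sum₂_mul z w k
  calc ‖z ^ k - w ^ k‖
      = ‖(∑ i ∈ Finset.range k, z ^ i * w ^ (k - 1 - i)) * (z - w)‖ := by rw [h]
    _ = ‖∑ i ∈ Finset.range k, z ^ i * w ^ (k - 1 - i)‖ * ‖z - w‖ :=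
        norm_mul _ _
    _ ≤ (k * R ^ (k - 1)) * ‖z - w‖ := by
        apply mul_le_mul_of_nonneg_right _ (norm_nonneg _)
        calc ‖∑ i ∈ Finset.range k, z ^ i * w ^ (k - 1 - i)‖
            ≤ ∑ i ∈ Finset.range k, ‖z ^ i * w ^ (k - 1 - i)‖ :=
              norm_sum_le _ _
          _ ≤ ∑ _i ∈ Finset.range k, R ^ (k - 1) := by
              apply Finset.sum_le_sum
              intro i hi
              rw [norm_mul, norm_pow, norm_pow]
              have hik : i + (k - 1 - i) = k - 1 := by
                have := Finset.mem_range.mp hi; omega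
              calc ‖z‖ ^ i * ‖w‖ ^ (k - 1 - i)
                  ≤ R ^ i * R ^ (k - 1 - i) := by
                    apply mul_le_mul (pow_le_pow_left₀ (norm_nonneg _) hz i)
                      (pow_le_pow_left₀ (norm_nonneg _) hw _)
                      (pow_nonneg (norm_nonneg _) _) (pow_nonneg hR _)
                _ = R ^ (k - 1) := by rw [← pow_add, hik]
          _ = k * R ^ (k - 1) := by rw [Finset.sum_const, Finset.card_range]; ring

lemma le_house {α : ℂ} (hα : IsIntegral ℚ α) {z : ℂ}
    (hz : Polynomial.aeval z (minpoly ℚ α) = 0) : ‖z‖ ≤ house α := by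
  set q := minpoly ℚ α with hq
  have hq0 : q.map (algebraMap ℚ ℂ) ≠ 0 :=
    Polynomial.map_ne_zero (minpoly.ne_zero hα)
  have hfin : Set.Finite {w : ℂ | Polynomial.aeval w q = 0} := by
    have : {w : ℂ | Polynomial.aeval w q = 0} =
        {w : ℂ | (q.map (algebraMap ℚ ℂ)).IsRoot w} := by
      ext w
      simp [Polynomial.IsRoot, Polynomial.eval_map, Polynomial.aeval_def]
    rw [this]
    exact Polynomial.finite_setOf_isRoot hq0
  have hsub : {x : ℝ | ∃ w : ℂ, Polynomial.aeval w q = 0 ∧ x = ‖w‖} ⊆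
      norm '' {w : ℂ | Polynomial.aeval w q = 0} := by
    rintro x ⟨w, hw, rfl⟩
    exact ⟨w, hw, rfl⟩
  have hbdd : BddAbove {x : ℝ | ∃ w : ℂ, Polynomial.aeval w q = 0 ∧ x = ‖w‖} :=
    BddAbove.mono hsub (hfin.image _).bddAbove
  exact le_csSup hbdd ⟨z, hz, rfl⟩

lemma core {d n : ℕ} (hd0 : 0 < d) (hnd : n < d) (u : ℂ) (hu : ‖u‖ = 1)
    (R : ℝ) (hR0 : 0 < R) (cf : Fin (n + 1) → ℂ) (root : Fin d → ℂ)
    (hroot : ∀ i, ‖root i‖ ≤ R) (H : ℝ) (hH0 : 0 ≤ H)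
    (hH : ∀ i : Fin d, ‖∑ k : Fin (n + 1), cf k * root i ^ (k : ℕ)‖ ≤ H)
    (δ cc : ℝ) (hδ0 : 0 ≤ δ) (hcc : 0 ≤ cc) (hcc2 : (d : ℝ) ^ 3 ≤ cc ^ 2)
    (sel : Fin d → Fin d)
    (hsel : ∀ j : Fin d, 
      ‖root (sel j) - (R : ℂ) * (u * zetad d ^ ((j : ℕ) + 1))‖ ≤ R * δ) :
    (1 - cc * δ) * ‖cf (Fin.last n)‖ * R ^ n ≤ H := by
  haveI : Nonempty (Fin d) := ⟨⟨0, hd0⟩⟩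
  set Q : ℂ → ℂ := fun z => ∑ k : Fin (n + 1), cf k * z ^ (k : ℕ) with hQdef
  set T : Fin d → ℂ := fun j => u * zetad d ^ ((j : ℕ) + 1) with hTdef
  set w : Fin d → ℂ := fun j => (R : ℂ) * T j with hwdef
  set An : ℝ := ‖cf (Fin.last n)‖ with hAndef
  have hAn0 : 0 ≤ An := norm_nonneg _
  have habsT : ∀ j, ‖T j‖ = 1 := by
    intro j; rw [hTdef, norm_mul, norm_pow, hu, zetad_abs, one_pow, one_mul]
  have habsw : ∀ j, ‖w j‖ = R := by
    intro j
    rw [hwdef, norm_mul, Complex.norm_real, Real.norm_eq_abs, abs_of_pos hR0, habsT, mul_one]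
  obtain ⟨jm, hjm⟩ := Finite.exists_max (fun j : Fin d => ‖Q (w j)‖)
  set M : ℝ := ‖Q (w jm)‖ with hMdef
  have hM0 : 0 ≤ M := norm_nonneg _
  set g : Fin (n + 1) → ℂ := fun k => cf k * (R : ℂ) ^ (k : ℕ) with hgdef
  have hQw : ∀ j, Q (w j) = ∑ k : Fin (n + 1), g k * (T j) ^ (k : ℕ) := by
    intro j
    refine Finset.sum_congr rfl fun k _ => ?_
    rw [hwdef, mul_pow, hgdef]; ring
  have hkd : ∀ k : Fin (n + 1), (k : ℕ) < d := fun k => lt_of_le_of_lt (Fin.is_le k) hnd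
  -- extraction identity
  have hext : (d : ℂ) * (cf (Fin.last n) * (R : ℂ) ^ n) =
      ∑ j : Fin d, Q (w j) * ((starRingEnd ℂ) (T j)) ^ n := by
    have h1 : ∀ j : Fin d, Q (w j) * ((starRingEnd ℂ) (T j)) ^ n =
        ∑ k : Fin (n + 1), g k * ((T j) ^ (k : ℕ) * ((starRingEnd ℂ) (T j)) ^ n) := by
      intro j
      rw [hQw, Finset.sum_mul]
      exact Finset.sum_congr rfl fun k _ => by ring
    rw [Finset.sum_congr rfl fun j _ => h1 j, Finset.sum_comm]
    have h2 : ∀ k : Fin (n + 1),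
        ∑ j : Fin d, g k * ((T j) ^ (k : ℕ) * ((starRingEnd ℂ) (T j)) ^ n) =
        g k * (if (k : ℕ) = n then (d : ℂ) else 0) := by
      intro k
      rw [← Finset.mul_sum]
      congr 1
      exact sum_t hd0 u hu (hkd k) hnd
    rw [Finset.sum_congr rfl fun k _ => h2 k]
    have h4 : (∑ k : Fin (n + 1), g k * (if (k : ℕ) = n then (d : ℂ) else 0)) =
        g (Fin.last n) * (if ((Fin.last n : Fin (n + 1)) : ℕ) = n then (d : ℂ) else 0) :=
      Finset.sum_eq_single (Fin.last n)
        (fun b _ hb => by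
          have hbn : (b : ℕ) ≠ n := fun h => hb (Fin.ext (by simp [Fin.val_last, h]))
          simp [hbn])
        (fun h => absurd (Finset.mem_univ _) h)
    rw [h4]
    simp only [Fin.val_last, if_true, eq_self_iff_true, hgdef]
    ring
  -- An R^n ≤ M
  have hAnM : An * R ^ n ≤ M := by
    have habs := congrArg norm hext
    rw [norm_mul, norm_mul, norm_pow, Complex.norm_natCast, Complex.norm_real, Real.norm_eq_abs,
      abs_of_pos hR0] at habs
    have hle : ‖∑ j : Fin d, Q (w j) * ((starRingEnd ℂ) (T j)) ^ n‖ ≤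
        (d : ℝ) * M := by
      calc ‖∑ j : Fin d, Q (w j) * ((starRingEnd ℂ) (T j)) ^ n‖
          ≤ ∑ j : Fin d, ‖Q (w j) * ((starRingEnd ℂ) (T j)) ^ n‖ :=
            norm_sum_le _ _
        _ ≤ ∑ _j : Fin d, M := by
            refine Finset.sum_le_sum fun j _ => ?_
            rw [norm_mul, norm_pow, Complex.norm_conj, habsT, one_pow, mul_one]
            exact hjm j
        _ = (d : ℝ) * M := by
            rw [Finset.sum_const, Finset.card_univ, Fintype.card_fin, nsmul_eq_mul]
    rw [← habs] at hle
    have hd' : (0 : ℝ) < d := Nat.cast_pos.mpr hd0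
    rw [hAndef]
    exact le_of_mul_le_mul_left hle hd'
  -- Parseval
  have hcon : ∀ j, (starRingEnd ℂ) (Q (w j)) =
      ∑ k : Fin (n + 1), (starRingEnd ℂ) (g k) * ((starRingEnd ℂ) (T j)) ^ (k : ℕ) := by
    intro j
    rw [hQw j, map_sum]
    exact Finset.sum_congr rfl fun k _ => by rw [map_mul, map_pow]
  have hCid : ∑ j : Fin d, Q (w j) * (starRingEnd ℂ) (Q (w j)) =
      (d : ℂ) * ∑ k : Fin (n + 1), g k * (starRingEnd ℂ) (g k) := by
    have h1 : ∀ j : Fin d, Q (w j) * (starRingEnd ℂ) (Q (w j)) =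
        ∑ k : Fin (n + 1), ∑ k' : Fin (n + 1), (g k * (starRingEnd ℂ) (g k')) *
          ((T j) ^ (k : ℕ) * ((starRingEnd ℂ) (T j)) ^ (k' : ℕ)) := by
      intro j
      rw [hcon j, hQw j, Finset.sum_mul_sum]
      exact Finset.sum_congr rfl fun k _ => Finset.sum_congr rfl fun k' _ => by ring
    rw [Finset.sum_congr rfl fun j _ => h1 j, Finset.sum_comm]
    have h2 : ∀ k : Fin (n + 1),
        (∑ j : Fin d, ∑ k' : Fin (n + 1), (g k * (starRingEnd ℂ) (g k')) *
          ((T j) ^ (k : ℕ) * ((starRingEnd ℂ) (T j)) ^ (k' : ℕ))) =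
        (g k * (starRingEnd ℂ) (g k)) * (d : ℂ) := by
      intro k
      rw [Finset.sum_comm]
      have h3 : ∀ k' : Fin (n + 1),
          (∑ j : Fin d, (g k * (starRingEnd ℂ) (g k')) *
            ((T j) ^ (k : ℕ) * ((starRingEnd ℂ) (T j)) ^ (k' : ℕ))) =
          (g k * (starRingEnd ℂ) (g k')) *
            (if (k : ℕ) = (k' : ℕ) then (d : ℂ) else 0) := by
        intro k'
        rw [← Finset.mul_sum]
        congr 1
        exact sum_t hd0 u hu (hkd k) (hkd k')
      rw [Finset.sum_congr rfl fun k' _ => h3 k']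
      have h4 : (∑ k' : Fin (n + 1), (g k * (starRingEnd ℂ) (g k')) *
          (if (k : ℕ) = (k' : ℕ) then (d : ℂ) else 0)) =
          (g k * (starRingEnd ℂ) (g k)) * (if (k : ℕ) = (k : ℕ) then (d : ℂ) else 0) :=
        Finset.sum_eq_single k
          (fun b _ hb => by
            have hbn : (k : ℕ) ≠ (b : ℕ) := fun h => hb (Fin.ext h.symm)
            simp [hbn])
          (fun h => absurd (Finset.mem_univ _) h)
      rw [h4]
      simp
    rw [Finset.sum_congr rfl fun k _ => h2 k, ← Finset.sum_mul, mul_comm]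
  have hL : ∀ j : Fin d, Q (w j) * (starRingEnd ℂ) (Q (w j)) =
      (((‖Q (w j)‖) ^ 2 : ℝ) : ℂ) := by
    intro j; rw [Complex.mul_conj, Complex.normSq_eq_norm_sq]
  have hRk : ∀ k : Fin (n + 1), g k * (starRingEnd ℂ) (g k) =
      (((‖cf k‖ * R ^ (k : ℕ)) ^ 2 : ℝ) : ℂ) := by
    intro k
    rw [Complex.mul_conj, Complex.normSq_eq_norm_sq, hgdef]
    rw [norm_mul, norm_pow, Complex.norm_real, Real.norm_eq_abs, abs_of_pos hR0]
  rw [Finset.sum_congr rfl fun j _ => hL j, Finset.sum_congr rfl fun k _ => hRk k] at hCid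
  have hpars : ∑ j : Fin d, (‖Q (w j)‖) ^ 2 =
      (d : ℝ) * ∑ k : Fin (n + 1), (‖cf k‖ * R ^ (k : ℕ)) ^ 2 := by
    exact_mod_cast hCid
  have hsumsq : ∑ k : Fin (n + 1), (‖cf k‖ * R ^ (k : ℕ)) ^ 2 ≤ M ^ 2 := by
    have h1 : ∑ j : Fin d, (‖Q (w j)‖) ^ 2 ≤ (d : ℝ) * M ^ 2 := by
      calc ∑ j : Fin d, (‖Q (w j)‖) ^ 2 ≤ ∑ _j : Fin d, M ^ 2 :=
            Finset.sum_le_sum fun j _ =>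
              pow_le_pow_left₀ (norm_nonneg _) (hjm j) 2
        _ = (d : ℝ) * M ^ 2 := by
            rw [Finset.sum_const, Finset.card_univ, Fintype.card_fin, nsmul_eq_mul]
    rw [hpars] at h1
    exact le_of_mul_le_mul_left h1 (Nat.cast_pos.mpr hd0)
  set B : ℝ := ∑ k : Fin (n + 1), ((k : ℕ) : ℝ) * (‖cf k‖ * R ^ (k : ℕ))
    with hBdef
  have hB0 : 0 ≤ B := Finset.sum_nonneg fun k _ => by positivity
  have hBle : B ≤ cc * M := by
    have h1 := Finset.sum_mul_sq_le_sq_mul_sq Finset.univ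
      (fun k : Fin (n + 1) => ((k : ℕ) : ℝ))
      (fun k : Fin (n + 1) => ‖cf k‖ * R ^ (k : ℕ))
    have h2 : ∑ k : Fin (n + 1), (((k : ℕ) : ℝ)) ^ 2 ≤ (d : ℝ) ^ 3 := by
      have hterm : ∀ k : Fin (n + 1), (((k : ℕ) : ℝ)) ^ 2 ≤ ((d : ℝ) - 1) ^ 2 := by
        intro k
        have hk : ((k : ℕ) : ℝ) ≤ (d : ℝ) - 1 := by
          have h5 : (k : ℕ) ≤ n := Fin.is_le k
          have h3 : (n : ℝ) + 1 ≤ (d : ℝ) := by exact_mod_cast hnd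
          have h6 : ((k : ℕ) : ℝ) ≤ (n : ℝ) := by exact_mod_cast h5
          linarith
        have hk0 : (0 : ℝ) ≤ ((k : ℕ) : ℝ) := Nat.cast_nonneg _
        nlinarith
      calc ∑ k : Fin (n + 1), (((k : ℕ) : ℝ)) ^ 2
          ≤ ∑ _k : Fin (n + 1), ((d : ℝ) - 1) ^ 2 := Finset.sum_le_sum fun k _ => hterm k
        _ = ((n : ℝ) + 1) * ((d : ℝ) - 1) ^ 2 := by
            rw [Finset.sum_const, Finset.card_univ, Fintype.card_fin, nsmul_eq_mul]
            push_cast; ring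
        _ ≤ (d : ℝ) ^ 3 := by
            have h4 : (n : ℝ) + 1 ≤ (d : ℝ) := by exact_mod_cast hnd
            have h5 : (1 : ℝ) ≤ (d : ℝ) := by exact_mod_cast hd0
            nlinarith
    have hBsq : B ^ 2 ≤ (cc * M) ^ 2 := by
      calc B ^ 2 ≤ (∑ k : Fin (n + 1), (((k : ℕ) : ℝ)) ^ 2) *
            ∑ k : Fin (n + 1), (‖cf k‖ * R ^ (k : ℕ)) ^ 2 := h1
        _ ≤ (d : ℝ) ^ 3 * M ^ 2 :=
            mul_le_mul h2 hsumsq (Finset.sum_nonneg fun k _ => sq_nonneg _) (by positivity)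
        _ ≤ cc ^ 2 * M ^ 2 := mul_le_mul_of_nonneg_right hcc2 (sq_nonneg _)
        _ = (cc * M) ^ 2 := by ring
    nlinarith [mul_nonneg hcc hM0]
  -- Lipschitz
  have hlip : ∀ j : Fin d, ‖Q (w j) - Q (root (sel j))‖ ≤ δ * B := by
    intro j
    have hwz : ‖w j - root (sel j)‖ ≤ R * δ := by
      rw [norm_sub_rev]
      exact hsel j
    have h1 : Q (w j) - Q (root (sel j)) =
        ∑ k : Fin (n + 1), cf k * ((w j) ^ (k : ℕ) - (root (sel j)) ^ (k : ℕ)) := by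
      rw [hQdef]
      rw [← Finset.sum_sub_distrib]
      exact Finset.sum_congr rfl fun k _ => by ring
    rw [h1]
    calc ‖∑ k : Fin (n + 1),
            cf k * ((w j) ^ (k : ℕ) - (root (sel j)) ^ (k : ℕ))‖
        ≤ ∑ k : Fin (n + 1),
            ‖cf k * ((w j) ^ (k : ℕ) - (root (sel j)) ^ (k : ℕ))‖ :=
          norm_sum_le _ _
      _ ≤ ∑ k : Fin (n + 1), δ * (((k : ℕ) : ℝ) *
            (‖cf k‖ * R ^ (k : ℕ))) := by
          refine Finset.sum_le_sum fun k _ => ?_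
          rw [norm_mul]
          have hb := abs_pow_sub_pow (w j) (root (sel j)) R (le_of_eq (habsw j))
            (hroot _) (k : ℕ)
          have hstep : ‖(w j) ^ (k : ℕ) - (root (sel j)) ^ (k : ℕ)‖ ≤
              ((k : ℕ) : ℝ) * R ^ (k : ℕ) * δ := by
            calc ‖(w j) ^ (k : ℕ) - (root (sel j)) ^ (k : ℕ)‖
                ≤ ((k : ℕ) : ℝ) * R ^ ((k : ℕ) - 1) *
                  ‖w j - root (sel j)‖ := hb
              _ ≤ ((k : ℕ) : ℝ) * R ^ ((k : ℕ) - 1) * (R * δ) :=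
                  mul_le_mul_of_nonneg_left hwz (by positivity)
              _ = ((k : ℕ) : ℝ) * R ^ (k : ℕ) * δ := by
                  rcases Nat.eq_zero_or_pos (k : ℕ) with h | h
                  · simp [h]
                  · obtain ⟨m, hm⟩ : ∃ m, (k : ℕ) = m + 1 := ⟨(k : ℕ) - 1, by omega⟩
                    rw [hm]
                    simp only [Nat.add_sub_cancel, pow_succ]
                    ring
          calc ‖cf k‖ *
                ‖(w j) ^ (k : ℕ) - (root (sel j)) ^ (k : ℕ)‖
              ≤ ‖cf k‖ * (((k : ℕ) : ℝ) * R ^ (k : ℕ) * δ) :=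
                mul_le_mul_of_nonneg_left hstep (norm_nonneg _)
            _ = δ * (((k : ℕ) : ℝ) * (‖cf k‖ * R ^ (k : ℕ))) := by ring
      _ = δ * B := by rw [hBdef, ← Finset.mul_sum]
  -- final assembly
  have hMH : M ≤ H + δ * (cc * M) := by
    have htri : M ≤ ‖Q (root (sel jm))‖ +
        ‖Q (w jm) - Q (root (sel jm))‖ := by
      rw [hMdef]
      calc ‖Q (w jm)‖ =
          ‖Q (root (sel jm)) + (Q (w jm) - Q (root (sel jm)))‖ := by ring_nf
        _ ≤ _ := norm_add_le _ _
    have hQz : ‖Q (root (sel jm))‖ ≤ H := hH (sel jm)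
    have hQd : ‖Q (w jm) - Q (root (sel jm))‖ ≤ δ * (cc * M) :=
      le_trans (hlip jm) (mul_le_mul_of_nonneg_left hBle hδ0)
    linarith
  rcases le_or_gt (1 - cc * δ) 0 with hcase | hcase
  · have hneg : (1 - cc * δ) * An * R ^ n ≤ 0 := by
      apply mul_nonpos_of_nonpos_of_nonneg
      · exact mul_nonpos_of_nonpos_of_nonneg hcase hAn0
      · positivity
    linarith
  · have hexp : (1 - cc * δ) * M = M - δ * (cc * M) := by ring
    have h1 : (1 - cc * δ) * M ≤ H := by rw [hexp]; linarith
    calc (1 - cc * δ) * An * R ^ n = (1 - cc * δ) * (An * R ^ n) := by ring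
      _ ≤ (1 - cc * δ) * M := mul_le_mul_of_nonneg_left hAnM hcase.le
      _ ≤ H := h1

/-- Let `O ⊆ O_K` (here: the coefficients `a j ∈ K` are integral over `ℤ`),
`ξ` a nonzero algebraic integer with `[K(ξ):K] = d`, and `P = a_0 + ⋯ + a_n x^n` with
`1 ≤ n < d`, `a_n ≠ 0`. For each embedding `σ : K → ℂ` with `r σ` the `d`-tuple of roots of
`σ(M_{ξ,K})` (the images of `ξ` under the `d` extensions of `σ`), the house of `α = P(ξ)`
is at least `(1 − d^{3/2} D(r σ/‖r σ‖)) |σ(a_n)| ‖r σ‖^n`. -/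
theorem stmt15 (K : IntermediateField ℚ ℂ) [FiniteDimensional ℚ K]
    (ξ : ℂ) (hξ0 : ξ ≠ 0) (hξint : IsIntegral ℤ ξ)
    (d : ℕ) (hd : d = (minpoly K ξ).natDegree)
    (n : ℕ) (hn1 : 1 ≤ n) (hnd : n < d)
    (a : Fin (n + 1) → K) (haint : ∀ j, IsIntegral ℤ (a j : ℂ))
    (han : a (Fin.last n) ≠ 0)
    (r : (K →+* ℂ) → Fin d → ℂ)
    (hr : ∀ σ : K →+* ℂ,
      (minpoly K ξ).map σ = ∏ i : Fin d, (Polynomial.X - Polynomial.C (r σ i)))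
    (σ : K →+* ℂ) :
    (1 - (d : ℝ) ^ ((3 : ℝ) / 2) *
          Disc (fun i => r σ i / ((⨆ i : Fin d, ‖r σ i‖ : ℝ) : ℂ))) *
        ‖σ (a (Fin.last n))‖ * (⨆ i : Fin d, ‖r σ i‖) ^ n ≤
      house (∑ j : Fin (n + 1), (a j : ℂ) * ξ ^ (j : ℕ)) := by
  have hd0 : 0 < d := by omega
  haveI : Nonempty (Fin d) := ⟨⟨0, hd0⟩⟩
  set α : ℂ := ∑ j : Fin (n + 1), (a j : ℂ) * ξ ^ (j : ℕ) with hαdef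
  set R : ℝ := ⨆ i : Fin d, ‖r σ i‖ with hRdef
  have hαint : IsIntegral ℚ α := by
    have : IsIntegral ℤ α :=
      IsIntegral.sum _ (fun k _ => ((haint k).mul (hξint.pow _)))
    exact this.tower_top
  have hKξ : IsIntegral K ξ := hξint.tower_top
  have hbddR : BddAbove (Set.range fun i : Fin d => ‖r σ i‖) :=
    (Set.finite_range _).bddAbove
  have hRub : ∀ i, ‖r σ i‖ ≤ R := fun i => le_ciSup hbddR i
  have hpmap : Polynomial.eval (0 : ℂ) ((minpoly K ξ).map σ) ≠ 0 := by
    rw [Polynomial.eval_zero_map, ← Polynomial.coeff_zero_eq_eval_zero]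
    exact fun h => minpoly.coeff_zero_ne_zero hKξ hξ0 (σ.injective (by rwa [map_zero]))
  have hri : ∀ i, r σ i ≠ 0 := by
    intro i hri0
    apply hpmap
    rw [hr σ, Polynomial.eval_prod]
    refine Finset.prod_eq_zero (Finset.mem_univ i) ?_
    simp [hri0]
  have hR0 : 0 < R := lt_of_lt_of_le (norm_pos_iff.mpr (hri ⟨0, hd0⟩)) (hRub _)
  have hRC0 : ((R : ℂ)) ≠ 0 := Complex.ofReal_ne_zero.mpr hR0.ne'
  have hconj : ∀ i : Fin d,
      ‖∑ k : Fin (n + 1), σ (a k) * (r σ i) ^ (k : ℕ)‖ ≤ house α := by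
    intro i
    apply le_house hαint
    apply conj_root K ξ hKξ n a σ (r σ i)
    rw [hr σ, Polynomial.eval_prod]
    exact Finset.prod_eq_zero (Finset.mem_univ i) (by simp)
  have hH0 : 0 ≤ house α :=
    le_trans (norm_nonneg α) (le_house hαint (minpoly.aeval ℚ α))
  set c : ℝ := (d : ℝ) ^ ((3 : ℝ) / 2) with hcdef
  have hc0 : 0 ≤ c := Real.rpow_nonneg (Nat.cast_nonneg d) _
  have hc2 : (d : ℝ) ^ 3 ≤ c ^ 2 := by
    have : ((d : ℝ) ^ ((3 : ℝ) / 2)) ^ (2 : ℕ) = (d : ℝ) ^ (3 : ℕ) := by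
      rw [← Real.rpow_natCast ((d : ℝ) ^ ((3 : ℝ) / 2)) 2,
        ← Real.rpow_mul (Nat.cast_nonneg d), ← Real.rpow_natCast (d : ℝ) 3]
      norm_num
    rw [hcdef, this]
  set An : ℝ := ‖σ (a (Fin.last n))‖ with hAndef
  have hAn0 : 0 ≤ An := norm_nonneg _
  set D : ℝ := Disc (fun i : Fin d => r σ i / (R : ℂ)) with hDdef
  set Sset : Set ℝ := {t : ℝ | ∃ u : ℂ, ‖u‖ = 1 ∧
    t = ⨆ j : Fin d, ⨅ i : Fin d,
      ‖r σ i / (R : ℂ) - u * zetad d ^ ((j : ℕ) + 1)‖} with hSdef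
  have hDS : D = sInf Sset := rfl
  have hlow : ∀ t ∈ Sset, (0 : ℝ) ≤ t := by
    rintro t ⟨u, hu, rfl⟩
    exact Real.iSup_nonneg fun j => le_ciInf fun i => norm_nonneg _
  have hSne : Sset.Nonempty := ⟨_, 1, by simp, rfl⟩
  have hSbdd : BddBelow Sset := ⟨0, hlow⟩
  have hD0 : 0 ≤ D := by rw [hDS]; exact Real.sInf_nonneg hlow
  -- main ε-step
  have hmain : ∀ ε : ℝ, 0 < ε → (1 - c * (D + ε)) * An * R ^ n ≤ house α := by
    intro ε hε
    obtain ⟨t, ⟨u, hu, htu⟩, htlt⟩ := (csInf_lt_iff hSbdd hSne).mp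
      (show sInf Sset < D + ε by rw [← hDS]; linarith)
    have hsel : ∀ j : Fin d, ∃ i : Fin d,
        ‖r σ i / (R : ℂ) - u * zetad d ^ ((j : ℕ) + 1)‖ < D + ε := by
      intro j
      obtain ⟨i0, hi0⟩ := Finite.exists_min
        (fun i : Fin d => ‖r σ i / (R : ℂ) - u * zetad d ^ ((j : ℕ) + 1)‖)
      refine ⟨i0, ?_⟩
      have hinf : ‖r σ i0 / (R : ℂ) - u * zetad d ^ ((j : ℕ) + 1)‖ ≤
          ⨅ i : Fin d, ‖r σ i / (R : ℂ) - u * zetad d ^ ((j : ℕ) + 1)‖ :=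
        le_ciInf hi0
      have hsup : (⨅ i : Fin d,
          ‖r σ i / (R : ℂ) - u * zetad d ^ ((j : ℕ) + 1)‖) ≤ t := by
        rw [htu]
        exact le_ciSup (f := fun j : Fin d => ⨅ i : Fin d,
          ‖r σ i / (R : ℂ) - u * zetad d ^ ((j : ℕ) + 1)‖)
          ((Set.finite_range _).bddAbove) j
      exact lt_of_le_of_lt (hinf.trans hsup) htlt
    choose sel hsel2 using hsel
    have hselR : ∀ j : Fin d, 
        ‖r σ (sel j) - (R : ℂ) * (u * zetad d ^ ((j : ℕ) + 1))‖ ≤ R * (D + ε) := by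
      intro j
      have h1 : r σ (sel j) - (R : ℂ) * (u * zetad d ^ ((j : ℕ) + 1)) =
          (r σ (sel j) / (R : ℂ) - u * zetad d ^ ((j : ℕ) + 1)) * (R : ℂ) := by
        rw [sub_mul, div_mul_cancel₀ _ hRC0]; ring
      rw [h1, norm_mul, Complex.norm_real, Real.norm_eq_abs, abs_of_pos hR0, mul_comm]
      exact mul_le_mul_of_nonneg_left (le_of_lt (hsel2 j)) hR0.le
    have hδ0 : 0 ≤ D + ε := by linarith
    exact core hd0 hnd u hu R hR0 (fun k => σ (a k)) (r σ) hRub (house α) hH0 hconj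
      (D + ε) c hδ0 hc0 hc2 sel hselR
  -- conclude by letting ε → 0
  set C : ℝ := c * An * R ^ n with hCdef
  have hC0 : 0 ≤ C := by positivity
  have key : ∀ ε : ℝ, 0 < ε → (1 - c * D) * An * R ^ n ≤ house α + C * ε := by
    intro ε hε
    have h := hmain ε hε
    have hexp : (1 - c * (D + ε)) * An * R ^ n =
        (1 - c * D) * An * R ^ n - C * ε := by rw [hCdef]; ring
    rw [hexp] at h
    linarith
  rcases eq_or_lt_of_le hC0 with hC | hC
  · have h := key 1 one_pos
    rw [← hC] at h
    linarith
  · apply le_of_forall_pos_le_add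
    intro ε hε
    have h := key (ε / C) (div_pos hε hC)
    calc (1 - c * D) * An * R ^ n ≤ house α + C * (ε / C) := h
      _ = house α + ε := by rw [mul_div_cancel₀ _ hC.ne']
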